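/- arXiv:1311.4941 — 2 statements merged into one kernel-verified Lean document; each statement's English description precedes it below -/
import Mathlib

section
/- Let λ > 0 and let X be a random variable whose law is the exponential distribution with rate λ. Then for every l ∈ ℤ, the probability that the integer ⌊X/2^l⌋ is odd equals 1/(1 + e^{λ·2^l}). (In other words, the l-th binary digit of X is Bernoulli with parameter 1/(1+e^{λ·2^l}).) -/
open MeasureTheory ProbabilityTheory Real Set

lemma expMeasure_apply' (lam : ℝ) {s : Set ℝ} (hs : MeasurableSet s) :
    expMeasure lam s = ∫⁻ x in s, exponentialPDF lam x := by
  rw [expMeasure, gammaMeasure, withDensity_apply _ hs]; rfl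

lemma expMeasure_singleton (lam : ℝ) (x : ℝ) : expMeasure lam {x} = 0 := by
  rw [expMeasure, gammaMeasure]
  exact (withDensity_absolutelyContinuous volume _) (measure_singleton x)

lemma expMeasure_Iic' {lam : ℝ} (hlam : 0 < lam) {x : ℝ} (hx : 0 ≤ x) :
    expMeasure lam (Iic x) = ENNReal.ofReal (1 - Real.exp (-(lam * x))) := by
  rw [expMeasure_apply' lam measurableSet_Iic,
    lintegral_exponentialPDF_eq_antiDeriv hlam, if_pos hx]

lemma expMeasure_Ico' {lam : ℝ} (hlam : 0 < lam) {a b : ℝ} (ha : 0 ≤ a) (hab : a ≤ b) :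
    expMeasure lam (Ico a b)
      = ENNReal.ofReal (Real.exp (-(lam * a)) - Real.exp (-(lam * b))) := by
  have hIco : expMeasure lam (Ioo a b) = expMeasure lam (Ico a b) := by
    have := measure_diff_null (μ := expMeasure lam) (s := Ico a b) (expMeasure_singleton lam a)
    rwa [Ico_diff_left] at this
  have hIoc : expMeasure lam (Ioo a b) = expMeasure lam (Ioc a b) := by
    have := measure_diff_null (μ := expMeasure lam) (s := Ioc a b) (expMeasure_singleton lam b)
    rwa [Ioc_sdiff_right] at this
  have hsplit : expMeasure lam (Iic a) + expMeasure lam (Ioc a b) = expMeasure lam (Iic b) := by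
    rw [← measure_union (Iic_disjoint_Ioc le_rfl) measurableSet_Ioc, Iic_union_Ioc_eq_Iic hab]
  rw [expMeasure_Iic' hlam ha, expMeasure_Iic' hlam (ha.trans hab)] at hsplit
  have h1 : 0 ≤ 1 - Real.exp (-(lam * a)) := by
    have : Real.exp (-(lam * a)) ≤ 1 := Real.exp_le_one_iff.mpr (by nlinarith)
    linarith
  have h2 : 0 ≤ Real.exp (-(lam * a)) - Real.exp (-(lam * b)) := by
    have : Real.exp (-(lam * b)) ≤ Real.exp (-(lam * a)) := Real.exp_le_exp.mpr (by nlinarith)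
    linarith
  have key : ENNReal.ofReal (1 - Real.exp (-(lam * a)))
      + ENNReal.ofReal (Real.exp (-(lam * a)) - Real.exp (-(lam * b)))
      = ENNReal.ofReal (1 - Real.exp (-(lam * b))) := by
    rw [← ENNReal.ofReal_add h1 h2]; ring_nf
  rw [← hIco, hIoc]
  exact (ENNReal.add_right_inj ENNReal.ofReal_ne_top).mp (hsplit.trans key.symm)

/-- If `X` is exponentially distributed with rate `λ`, then for every `l : ℤ` the `l`-th binary
digit of `X` (i.e. the parity of `⌊X / 2^l⌋`) is Bernoulli with parameter
`1 / (1 + exp (λ 2^l))`. -/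
theorem binary_digit_of_exponential_bernoulli
    {Ω : Type*} [MeasurableSpace Ω] (P : Measure Ω) [IsProbabilityMeasure P]
    (lam : ℝ) (hlam : 0 < lam) (X : Ω → ℝ) (hX : Measurable X)
    (hlaw : P.map X = expMeasure lam) (l : ℤ) :
    P {ω | Odd ⌊X ω / (2 : ℝ) ^ l⌋} = ENNReal.ofReal (1 / (1 + Real.exp (lam * 2 ^ l))) := by
  have h2l : (0:ℝ) < (2:ℝ) ^ l := zpow_pos (by norm_num) l
  set c : ℝ := lam * 2 ^ l with hc_def
  have hc : 0 < c := mul_pos hlam h2l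
  set S : Set ℝ := {x : ℝ | Odd ⌊x / (2:ℝ) ^ l⌋} with hS_def
  have hSmeas : MeasurableSet S := by
    have : S = (fun x : ℝ => ⌊x / (2:ℝ) ^ l⌋) ⁻¹' {n | Odd n} := rfl
    rw [this]
    exact (Int.measurable_floor.comp (measurable_id.div_const _)) (by measurability)
  have hmap : P {ω | Odd ⌊X ω / (2:ℝ) ^ l⌋} = expMeasure lam S := by
    rw [← hlaw, Measure.map_apply hX hSmeas]
    rfl
  set f : ℕ → Set ℝ := fun k => Ico ((2*(k:ℝ)+1) * 2 ^ l) ((2*(k:ℝ)+2) * 2 ^ l) with hf_def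
  have hset : S ∩ Ici 0 = ⋃ k : ℕ, f k := by
    ext x
    simp only [hS_def, hf_def, mem_inter_iff, mem_setOf_eq, mem_Ici, mem_iUnion, mem_Ico]
    constructor
    · rintro ⟨⟨m, hm⟩, hx⟩
      have hy : (0:ℝ) ≤ x / 2 ^ l := div_nonneg hx h2l.le
      have hm0 : 0 ≤ m := by
        have : (0:ℤ) ≤ ⌊x / (2:ℝ) ^ l⌋ := Int.floor_nonneg.mpr hy
        omega
      lift m to ℕ using hm0 with k
      refine ⟨k, ?_, ?_⟩
      · have h1 : ((2*(k:ℝ)+1)) ≤ x / 2 ^ l := by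
          have := Int.floor_le (x / (2:ℝ) ^ l)
          rw [hm] at this; push_cast at this; linarith
        calc (2*(k:ℝ)+1) * 2 ^ l ≤ (x / 2 ^ l) * 2 ^ l :=
              mul_le_mul_of_nonneg_right h1 h2l.le
          _ = x := div_mul_cancel₀ x h2l.ne'
      · have h2 : x / 2 ^ l < (2*(k:ℝ)+2) := by
          have := Int.lt_floor_add_one (x / (2:ℝ) ^ l)
          rw [hm] at this; push_cast at this; linarith
        calc x = (x / 2 ^ l) * 2 ^ l := (div_mul_cancel₀ x h2l.ne').symm
          _ < (2*(k:ℝ)+2) * 2 ^ l := mul_lt_mul_of_pos_right h2 h2l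
    · rintro ⟨k, h1, h2⟩
      have hx : 0 ≤ x := le_trans (by positivity) h1
      have hfl : ⌊x / (2:ℝ) ^ l⌋ = 2 * (k:ℤ) + 1 := by
        rw [Int.floor_eq_iff]
        constructor
        · push_cast
          rw [le_div_iff₀ h2l]; linarith
        · push_cast
          rw [div_lt_iff₀ h2l]; linarith
      exact ⟨⟨k, by omega⟩, hx⟩
  have hzero : expMeasure lam (S \ Ici 0) = 0 := by
    have hsub : S \ Ici 0 ⊆ Iio 0 := fun x hx => mem_Iio.mpr (not_le.mp (fun h => hx.2 h))
    refine measure_mono_null hsub ?_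
    rw [expMeasure_apply' lam measurableSet_Iio]
    exact lintegral_exponentialPDF_of_nonpos le_rfl
  have hSsplit : expMeasure lam S = expMeasure lam (S ∩ Ici 0) := by
    rw [← measure_inter_add_diff S measurableSet_Ici, hzero, add_zero]
  have hdisj : Pairwise (Function.onFun Disjoint f) := by
    intro i j hij
    have key : ∀ a b : ℕ, a < b → Disjoint (f a) (f b) := by
      intro a b hab
      rw [Set.disjoint_left]
      rintro x ⟨_, hx2⟩ ⟨hx3, _⟩
      have hcast : (a:ℝ) + 1 ≤ (b:ℝ) := by exact_mod_cast hab
      have : (2*(a:ℝ)+2) * 2 ^ l ≤ (2*(b:ℝ)+1) * 2 ^ l :=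
        mul_le_mul_of_nonneg_right (by linarith) h2l.le
      linarith
    rcases hij.lt_or_gt with h | h
    · exact key _ _ h
    · exact (key _ _ h).symm
  have hmeas : ∀ k, MeasurableSet (f k) := fun k => measurableSet_Ico
  have hIcoval : ∀ k : ℕ, expMeasure lam (f k)
      = ENNReal.ofReal ((Real.exp (-c) - Real.exp (-(2*c))) * (Real.exp (-(2*c)))^k) := by
    intro k
    rw [hf_def]
    have ha : (0:ℝ) ≤ (2*(k:ℝ)+1) * 2 ^ l := by positivity
    have hab : (2*(k:ℝ)+1) * 2 ^ l ≤ (2*(k:ℝ)+2) * 2 ^ l :=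
      mul_le_mul_of_nonneg_right (by linarith) h2l.le
    rw [expMeasure_Ico' hlam ha hab]
    congr 1
    rw [sub_mul, ← Real.exp_nat_mul, ← Real.exp_add, ← Real.exp_add]
    congr 1 <;> (rw [hc_def]; push_cast; ring)
  have hr0 : (0:ℝ) ≤ Real.exp (-(2*c)) := (Real.exp_pos _).le
  have hr1 : Real.exp (-(2*c)) < 1 := Real.exp_lt_one_iff.mpr (by linarith)
  have hA : 0 ≤ Real.exp (-c) - Real.exp (-(2*c)) := by
    have : Real.exp (-(2*c)) ≤ Real.exp (-c) := Real.exp_le_exp.mpr (by linarith)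
    linarith
  have hsummable : Summable (fun k : ℕ =>
      (Real.exp (-c) - Real.exp (-(2*c))) * (Real.exp (-(2*c)))^k) :=
    (summable_geometric_of_lt_one hr0 hr1).mul_left _
  have htsum : ∑' k : ℕ, expMeasure lam (f k)
      = ENNReal.ofReal ((Real.exp (-c) - Real.exp (-(2*c))) * (1 - Real.exp (-(2*c)))⁻¹) := by
    simp_rw [hIcoval]
    rw [← ENNReal.ofReal_tsum_of_nonneg (fun k => mul_nonneg hA (pow_nonneg hr0 k)) hsummable,
      tsum_mul_left, tsum_geometric_of_lt_one hr0 hr1]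
  have hfinal : (Real.exp (-c) - Real.exp (-(2*c))) * (1 - Real.exp (-(2*c)))⁻¹
      = 1 / (1 + Real.exp c) := by
    have hu0 : 0 < Real.exp (-c) := Real.exp_pos _
    have hu1 : Real.exp (-c) < 1 := Real.exp_lt_one_iff.mpr (by linarith)
    have hE : Real.exp c * Real.exp (-c) = 1 := by
      rw [← Real.exp_add]; simp
    have h2c : Real.exp (-(2*c)) = Real.exp (-c) * Real.exp (-c) := by
      rw [← Real.exp_add]; ring_nf
    set u := Real.exp (-c)
    rw [h2c]
    have hden : 1 - u * u ≠ 0 := by nlinarith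
    have hden2 : 1 + Real.exp c ≠ 0 := by positivity
    rw [mul_inv_eq_iff_eq_mul₀ hden]
    field_simp
    nlinarith [hE]
  rw [hmap, hSsplit, hset, measure_iUnion hdisj hmeas, htsum, hfinal]
end

section
/- Let S ≥ 1, let q_1, …, q_S ≥ 0 with Σ_{s=1}^S q_s = 1, let E_X > 0 and E_{Z_1}, …, E_{Z_S} > 0, and let 0 < ε < 1. Suppose L₁ ≥ -log₂(ε) - min_s log₂(E_{Z_s}), L₂ ≥ -log₂(ε) + log₂(E_X), and min_s E_X/E_{Z_s} ≥ 1/ε, where L₁, L₂ are integers. With p_l = 1/(1 + e^{2^l/E_X}) and p̃_{l,s} = 1/(1 + e^{2^l/E_{Z_s}}), the rate R = Σ_{l=-L₁}^{L₂} Σ_{s=1}^S q_s·[H(p_l ⊗ p̃_{l,s}) - H(p̃_{l,s})] satisfies R ≥ Σ_{s=1}^S q_s·log₂(1 + E_X/E_{Z_s}) - 5·log₂(e)·ε. -/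
/-- The binary entropy function (base 2): `H(p) = -p log₂ p - (1-p) log₂ (1-p)`. -/
noncomputable def binEnt (p : ℝ) : ℝ :=
  -(p * Real.logb 2 p) - (1 - p) * Real.logb 2 (1 - p)

/-- The binary convolution `p ⊗ q = p(1-q) + q(1-p)`. -/
def binConv (p q : ℝ) : ℝ := p * (1 - q) + q * (1 - p)

/-- Entropy (in nats) of a geometric distribution with parameter `e^{-t}`. -/
noncomputable def Gn (t : ℝ) : ℝ :=
  -Real.log (1 - Real.exp (-t)) + t * Real.exp (-t) / (1 - Real.exp (-t))

lemma binEnt_eq (p : ℝ) : binEnt p = Real.binEntropy p / Real.log 2 := by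
  unfold binEnt Real.binEntropy Real.logb
  rw [Real.log_inv, Real.log_inv]; ring

lemma binEnt_mono {a b : ℝ} (ha : 0 ≤ a) (hab : a ≤ b) (hb : b ≤ 2⁻¹) :
    binEnt a ≤ binEnt b := by
  rw [binEnt_eq, binEnt_eq]
  have h := Real.binEntropy_strictMonoOn.monotoneOn
    ⟨ha, le_trans hab hb⟩ ⟨le_trans ha hab, hb⟩ hab
  have hl : (0:ℝ) < Real.log 2 := Real.log_pos (by norm_num)
  gcongr

lemma one_lt_exp_of_pos {t : ℝ} (ht : 0 < t) : 1 < Real.exp t := by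
  calc (1:ℝ) = Real.exp 0 := (Real.exp_zero).symm
  _ < Real.exp t := Real.exp_lt_exp.mpr ht

lemma Gn_step {t : ℝ} (ht : 0 < t) :
    Gn t - Gn (2 * t) = Real.binEntropy (1 / (1 + Real.exp t)) := by
  set E := Real.exp t with hEdef
  have hE1 : 1 < E := one_lt_exp_of_pos ht
  have hE0 : 0 < E := lt_trans one_pos hE1
  have h1E : (0:ℝ) < 1 + E := by linarith
  have hEm1 : (0:ℝ) < E - 1 := by linarith
  have hlogE : Real.log E = t := Real.log_exp t
  have hexpneg : Real.exp (-t) = E⁻¹ := Real.exp_neg t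
  have hs : 1 - Real.exp (-t) = (E - 1) / E := by
    rw [hexpneg]; field_simp
  have hGt : Gn t = t - Real.log (E - 1) + t / (E - 1) := by
    unfold Gn
    rw [hs, hexpneg, Real.log_div (by linarith) (by linarith), hlogE]
    field_simp
    try ring
  have hexpneg2 : Real.exp (-(2 * t)) = (E * E)⁻¹ := by
    rw [Real.exp_neg, two_mul, Real.exp_add]
  have hs2 : 1 - Real.exp (-(2 * t)) = ((E - 1) * (E + 1)) / (E * E) := by
    rw [hexpneg2]; field_simp; try ring
  have hG2t : Gn (2 * t) = 2 * t - Real.log (E - 1) - Real.log (E + 1)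
      + 2 * t / ((E - 1) * (E + 1)) := by
    unfold Gn
    rw [hs2, hexpneg2, Real.log_div (by positivity) (by positivity),
      Real.log_mul (by linarith) (by linarith), Real.log_mul (by linarith) (by linarith), hlogE]
    field_simp
    try ring
  have hp : (1:ℝ) / (1 + E) = (1 + E)⁻¹ := one_div _
  have h1p : 1 - (1:ℝ) / (1 + E) = E / (1 + E) := by field_simp; ring
  have hH : Real.binEntropy (1 / (1 + E)) = Real.log (1 + E) - t * E / (1 + E) := by
    unfold Real.binEntropy
    rw [h1p, hp, inv_inv, inv_div, Real.log_div (by linarith) (by linarith), hlogE]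
    field_simp
    try ring
  rw [hGt, hG2t, hH, show Real.log (E + 1) = Real.log (1 + E) by rw [add_comm]]
  field_simp
  try ring

lemma sum_telescope_Icc (F : ℤ → ℝ) (a : ℤ) : ∀ b : ℤ, a - 1 ≤ b →
    ∑ l ∈ Finset.Icc a b, (F l - F (l + 1)) = F a - F (b + 1) := by
  refine Int.le_induction ?_ ?_
  · have he : Finset.Icc a (a - 1) = ∅ := by
      apply Finset.Icc_eq_empty; omega
    rw [he, Finset.sum_empty, show a - 1 + 1 = a by ring, sub_self]
  · intro n hn ih
    have hins : Finset.Icc a (n + 1) = insert (n + 1) (Finset.Icc a n) := by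
      ext x; simp only [Finset.mem_Icc, Finset.mem_insert]; omega
    have hnotmem : (n + 1) ∉ Finset.Icc a n := by
      simp only [Finset.mem_Icc]; omega
    rw [hins, Finset.sum_insert hnotmem, ih]
    ring

lemma sum_binEnt (E : ℝ) (hE : 0 < E) (a b : ℤ) (hab : a - 1 ≤ b) :
    ∑ l ∈ Finset.Icc a b, binEnt (1 / (1 + Real.exp ((2:ℝ) ^ l / E))) =
      (Gn ((2:ℝ) ^ a / E) - Gn ((2:ℝ) ^ (b + 1) / E)) / Real.log 2 := by
  have key : ∀ l : ℤ, binEnt (1 / (1 + Real.exp ((2:ℝ) ^ l / E))) =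
      ((fun l : ℤ => Gn ((2:ℝ) ^ l / E)) l - (fun l : ℤ => Gn ((2:ℝ) ^ l / E)) (l + 1))
        / Real.log 2 := by
    intro l
    have ht : 0 < (2:ℝ) ^ l / E := by positivity
    have h2 : (2:ℝ) ^ (l + 1) / E = 2 * ((2:ℝ) ^ l / E) := by
      rw [zpow_add_one₀ (by norm_num : (2:ℝ) ≠ 0)]; ring
    simp only [h2]
    rw [binEnt_eq, Gn_step ht]
  calc ∑ l ∈ Finset.Icc a b, binEnt (1 / (1 + Real.exp ((2:ℝ) ^ l / E)))
      = ∑ l ∈ Finset.Icc a b, ((fun l : ℤ => Gn ((2:ℝ) ^ l / E)) l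
          - (fun l : ℤ => Gn ((2:ℝ) ^ l / E)) (l + 1)) / Real.log 2 :=
        Finset.sum_congr rfl fun l _ => key l
    _ = (∑ l ∈ Finset.Icc a b, ((fun l : ℤ => Gn ((2:ℝ) ^ l / E)) l
          - (fun l : ℤ => Gn ((2:ℝ) ^ l / E)) (l + 1))) / Real.log 2 :=
        (Finset.sum_div _ _ _).symm
    _ = _ := by rw [sum_telescope_Icc _ a b hab]

lemma exp_facts {t : ℝ} (ht : 0 < t) :
    0 < 1 - Real.exp (-t) ∧ 1 - Real.exp (-t) ≤ t ∧ 1 - t ≤ Real.exp (-t) := by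
  have h1 : Real.exp (-t) < 1 := by
    calc Real.exp (-t) < Real.exp 0 := Real.exp_lt_exp.mpr (by linarith)
    _ = 1 := Real.exp_zero
  have h2 : 1 + (-t) ≤ Real.exp (-t) := by linarith [Real.add_one_le_exp (-t)]
  exact ⟨by linarith, by linarith, by linarith⟩

lemma Gn_ge {t : ℝ} (ht : 0 < t) : -Real.log t + 1 - t ≤ Gn t := by
  obtain ⟨hs0, hst, hemt⟩ := exp_facts ht
  set s := 1 - Real.exp (-t) with hsdef
  have hes : Real.exp (-t) = 1 - s := by ring
  have hs1 : s < 1 := by have := Real.exp_pos (-t); linarith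
  have hlog : Real.log s - Real.log t ≤ s / t - 1 := by
    have h := Real.log_le_sub_one_of_pos (show (0:ℝ) < s / t by positivity)
    rwa [Real.log_div (by linarith) (by linarith)] at h
  have hts : (1:ℝ) ≤ t / s := (one_le_div hs0).mpr hst
  have hterm : 1 - t ≤ t * Real.exp (-t) / s := by
    rw [hes]
    have e1 : t * (1 - s) / s = (1 - s) * (t / s) := by ring
    have e2 : 1 - s ≤ (1 - s) * (t / s) := le_mul_of_one_le_right (by linarith) hts
    linarith
  have hst' : s / t ≤ 1 := by
    rw [div_le_one (by linarith)]; exact hst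
  unfold Gn
  rw [← hsdef]
  linarith

lemma Gn_le {t : ℝ} (ht : 0 < t) : Gn t ≤ -Real.log t + 1 + t := by
  obtain ⟨hs0, hst, hemt⟩ := exp_facts ht
  set s := 1 - Real.exp (-t) with hsdef
  have hes : Real.exp (-t) = 1 - s := by ring
  have hs1 : s < 1 := by have := Real.exp_pos (-t); linarith
  have hlog : Real.log t - Real.log s ≤ t / s - 1 := by
    have h := Real.log_le_sub_one_of_pos (show (0:ℝ) < t / s by positivity)
    rwa [Real.log_div (by linarith) (by linarith)] at h
  have hkey : t ≤ s * (1 + t) := by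
    have h2 : (1 + t) * Real.exp (-t) ≤ 1 := by
      rw [Real.exp_neg, mul_inv_le_iff₀ (Real.exp_pos t)]
      have := Real.add_one_le_exp t
      linarith
    rw [hes] at h2; nlinarith
  have hcomb : t / s - 1 + t * (1 - s) / s ≤ 1 + t := by
    have e : t / s - 1 + t * (1 - s) / s = (2 * t - s - t * s) / s := by
      field_simp; ring
    rw [e, div_le_iff₀ hs0]
    nlinarith
  unfold Gn
  rw [← hsdef, hes]
  linarith

lemma Gn_nonneg {t : ℝ} (ht : 0 < t) : 0 ≤ Gn t := by
  obtain ⟨hs0, hst, hemt⟩ := exp_facts ht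
  have hs1 : 1 - Real.exp (-t) < 1 := by have := Real.exp_pos (-t); linarith
  have h1 : Real.log (1 - Real.exp (-t)) ≤ 0 := Real.log_nonpos (by linarith) hs1.le
  have h2 : 0 ≤ t * Real.exp (-t) / (1 - Real.exp (-t)) := by positivity
  unfold Gn; linarith

lemma Gn_tail {T ε : ℝ} (hε : 0 < ε) (hT2 : 2 ≤ T) (hTε : 2 ≤ ε * T) : Gn T ≤ 2 * ε := by
  have hT0 : (0:ℝ) < T := by linarith
  have hx0 : 0 < Real.exp (-T) := Real.exp_pos _
  obtain ⟨hs0, -, -⟩ := exp_facts hT0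
  -- exp T ≥ 1 + T + T²/2
  have hsum : 1 + T + T ^ 2 / 2 ≤ Real.exp T := by
    have h := Real.sum_le_exp_of_nonneg (by linarith : (0:ℝ) ≤ T) 3
    simp [Finset.sum_range_succ] at h
    nlinarith [h]
  have hxT : Real.exp (-T) * T ≤ ε := by
    rw [Real.exp_neg, inv_mul_le_iff₀ (Real.exp_pos T)]
    nlinarith [mul_le_mul_of_nonneg_left hsum hε.le]
  -- exp(-T) ≤ 1/4 hence s ≥ 3/4
  have he1 : (2:ℝ) < Real.exp 1 := by
    have := Real.exp_one_gt_d9; linarith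
  have hx14 : Real.exp (-T) ≤ 1 / 4 := by
    have h1 : Real.exp (-T) ≤ Real.exp (-2) := Real.exp_le_exp.mpr (by linarith)
    have h2 : Real.exp (-2 : ℝ) = (Real.exp 1 * Real.exp 1)⁻¹ := by
      rw [Real.exp_neg, ← Real.exp_add]; norm_num
    have h3 : (4:ℝ) < Real.exp 1 * Real.exp 1 := by nlinarith
    rw [h2] at h1
    have : (Real.exp 1 * Real.exp 1)⁻¹ ≤ 1 / 4 := by
      rw [inv_le_comm₀ (by nlinarith) (by norm_num)]
      linarith
    linarith
  have hs34 : 3 / 4 ≤ 1 - Real.exp (-T) := by linarith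
  have hlogs : -Real.log (1 - Real.exp (-T)) ≤ Real.exp (-T) / (1 - Real.exp (-T)) := by
    have h := Real.log_le_sub_one_of_pos (inv_pos.mpr hs0)
    rw [Real.log_inv] at h
    have e : (1 - Real.exp (-T))⁻¹ - 1 = Real.exp (-T) / (1 - Real.exp (-T)) := by
      field_simp; ring
    linarith
  have hx2 : Real.exp (-T) * 2 ≤ Real.exp (-T) * T :=
    mul_le_mul_of_nonneg_left hT2 hx0.le
  have hεs : 3 / 2 * ε ≤ 2 * ε * (1 - Real.exp (-T)) := by nlinarith
  have hdiv : (Real.exp (-T) + T * Real.exp (-T)) / (1 - Real.exp (-T)) ≤ 2 * ε := by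
    rw [div_le_iff₀ hs0]
    nlinarith
  have e2 : Real.exp (-T) / (1 - Real.exp (-T)) + T * Real.exp (-T) / (1 - Real.exp (-T))
      = (Real.exp (-T) + T * Real.exp (-T)) / (1 - Real.exp (-T)) := by ring
  unfold Gn
  linarith

lemma log_one_add_le {x : ℝ} (hx : 0 < x) : Real.log (1 + x) ≤ Real.log x + 1 / x := by
  have h := Real.log_le_sub_one_of_pos (show (0:ℝ) < (1 + x) / x by positivity)
  rw [Real.log_div (by linarith) (by linarith)] at h
  have e : (1 + x) / x - 1 = 1 / x := by field_simp; ring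
  linarith

lemma perState (L1 L2 : ℤ) (EX EZ ε : ℝ) (hEX : 0 < EX) (hEZ : 0 < EZ)
    (hε : 0 < ε) (hε1 : ε < 1)
    (h1 : (2:ℝ) ^ (-L1) ≤ ε * EZ) (h2 : EX ≤ ε * (2:ℝ) ^ L2) (h3 : EZ ≤ ε * EX) :
    Real.logb 2 (1 + EX / EZ) - 5 * Real.logb 2 (Real.exp 1) * ε ≤
      ∑ l ∈ Finset.Icc (-L1) L2,
        (binEnt (1 / (1 + Real.exp ((2:ℝ) ^ l / EX)))
          - binEnt (1 / (1 + Real.exp ((2:ℝ) ^ l / EZ)))) := by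
  have hlog2 : (0:ℝ) < Real.log 2 := Real.log_pos (by norm_num)
  have hcpos : (0:ℝ) < (2:ℝ) ^ (-L1) := by positivity
  have hL2pos : (0:ℝ) < (2:ℝ) ^ L2 := by positivity
  -- -L1 ≤ L2
  have hchain : (2:ℝ) ^ (-L1) < (2:ℝ) ^ L2 := by nlinarith
  have hLL : -L1 ≤ L2 := by
    by_contra hcon
    push_neg at hcon
    have : (2:ℝ) ^ L2 ≤ (2:ℝ) ^ (-L1) :=
      zpow_le_zpow_right₀ (by norm_num) (by omega)
    linarith
  have hab : -L1 - 1 ≤ L2 := by omega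
  -- sum identity
  have hsplit : ∑ l ∈ Finset.Icc (-L1) L2,
      (binEnt (1 / (1 + Real.exp ((2:ℝ) ^ l / EX)))
        - binEnt (1 / (1 + Real.exp ((2:ℝ) ^ l / EZ)))) =
      ((Gn ((2:ℝ) ^ (-L1) / EX) - Gn ((2:ℝ) ^ (L2 + 1) / EX))
        - (Gn ((2:ℝ) ^ (-L1) / EZ) - Gn ((2:ℝ) ^ (L2 + 1) / EZ))) / Real.log 2 := by
    rw [Finset.sum_sub_distrib, sum_binEnt EX hEX _ _ hab, sum_binEnt EZ hEZ _ _ hab,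
      div_sub_div_same]
  have hδX0 : 0 < (2:ℝ) ^ (-L1) / EX := by positivity
  have hδZ0 : 0 < (2:ℝ) ^ (-L1) / EZ := by positivity
  have hδXε : (2:ℝ) ^ (-L1) / EX ≤ ε := by
    rw [div_le_iff₀ hEX]; nlinarith
  have hδZε : (2:ℝ) ^ (-L1) / EZ ≤ ε := by
    rw [div_le_iff₀ hEZ]; nlinarith
  have hA : -Real.log ((2:ℝ) ^ (-L1) / EX) + 1 - ε ≤ Gn ((2:ℝ) ^ (-L1) / EX) := by
    have := Gn_ge hδX0; linarith
  have hB : Gn ((2:ℝ) ^ (-L1) / EZ) ≤ -Real.log ((2:ℝ) ^ (-L1) / EZ) + 1 + ε := by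
    have := Gn_le hδZ0; linarith
  -- tail for X side
  have h2L : (2:ℝ) ^ (L2 + 1) = 2 * (2:ℝ) ^ L2 :=
    by rw [zpow_add_one₀ (by norm_num : (2:ℝ) ≠ 0)]; ring
  have hTXε : 2 ≤ ε * ((2:ℝ) ^ (L2 + 1) / EX) := by
    rw [h2L]
    have e : ε * (2 * (2:ℝ) ^ L2 / EX) = 2 * (ε * (2:ℝ) ^ L2) / EX := by ring
    rw [e, le_div_iff₀ hEX]
    nlinarith
  have hTX2 : 2 ≤ (2:ℝ) ^ (L2 + 1) / EX := by
    have hTX0 : 0 < (2:ℝ) ^ (L2 + 1) / EX := by positivity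
    nlinarith
  have hC : Gn ((2:ℝ) ^ (L2 + 1) / EX) ≤ 2 * ε := Gn_tail hε hTX2 hTXε
  have hD : 0 ≤ Gn ((2:ℝ) ^ (L2 + 1) / EZ) := Gn_nonneg (by positivity)
  have hlogdiff : Real.log ((2:ℝ) ^ (-L1) / EZ) - Real.log ((2:ℝ) ^ (-L1) / EX)
      = Real.log (EX / EZ) := by
    rw [Real.log_div (by positivity) (by linarith), Real.log_div (by positivity) (by linarith),
      Real.log_div (by linarith) (by linarith)]
    ring
  have hr0 : 0 < EX / EZ := by positivity
  have hlog1p : Real.log (1 + EX / EZ) ≤ Real.log (EX / EZ) + ε := by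
    have h := log_one_add_le hr0
    have e : 1 / (EX / EZ) = EZ / EX := one_div_div EX EZ
    have hEZX : EZ / EX ≤ ε := by rw [div_le_iff₀ hEX]; linarith
    rw [e] at h
    linarith
  have hnats : Real.log (1 + EX / EZ) - 5 * ε ≤
      (Gn ((2:ℝ) ^ (-L1) / EX) - Gn ((2:ℝ) ^ (L2 + 1) / EX))
        - (Gn ((2:ℝ) ^ (-L1) / EZ) - Gn ((2:ℝ) ^ (L2 + 1) / EZ)) := by
    linarith
  rw [hsplit, Real.logb, Real.logb, Real.log_exp]
  have e2 : Real.log (1 + EX / EZ) / Real.log 2 - 5 * (1 / Real.log 2) * ε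
      = (Real.log (1 + EX / EZ) - 5 * ε) / Real.log 2 := by ring
  rw [e2]
  gcongr

/-- **Theorem 3 of the paper.** For the fading additive exponential noise channel with `S`
fading states (state `s` having probability `q s` and noise mean `EZ s`), input mean `E_X`,
Bernoulli input parameters `p_l = 1/(1 + exp (2^l / E_X))` and noise parameters
`p̃_{l,s} = 1/(1 + exp (2^l / EZ s))`, if `0 < ε < 1`,
`L₁ ≥ -log₂ ε - min_s log₂ (EZ s)`, `L₂ ≥ -log₂ ε + log₂ E_X` and `min_s E_X / EZ s ≥ 1/ε`,
then the achievable rate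
`R = ∑_{l = -L₁}^{L₂} ∑_s q_s [H(p_l ⊗ p̃_{l,s}) - H(p̃_{l,s})]` satisfies
`R ≥ ∑_s q_s log₂ (1 + E_X / EZ s) - 5 log₂(e) ε`. -/
theorem fading_AEN_achievable_rate (S : ℕ) (hS : 1 ≤ S)
    (q : Fin S → ℝ) (hq : ∀ s, 0 ≤ q s) (hq1 : ∑ s, q s = 1)
    (EX : ℝ) (hEX : 0 < EX) (EZ : Fin S → ℝ) (hEZ : ∀ s, 0 < EZ s)
    (ε : ℝ) (hε : 0 < ε) (hε1 : ε < 1) (L1 L2 : ℤ)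
    (hL1 : -Real.logb 2 ε -
        Finset.univ.inf' ⟨⟨0, hS⟩, Finset.mem_univ _⟩ (fun s => Real.logb 2 (EZ s)) ≤ (L1 : ℝ))
    (hL2 : -Real.logb 2 ε + Real.logb 2 EX ≤ (L2 : ℝ))
    (hSNR : 1 / ε ≤ Finset.univ.inf' ⟨⟨0, hS⟩, Finset.mem_univ _⟩ (fun s => EX / EZ s)) :
    ∑ s, q s * Real.logb 2 (1 + EX / EZ s) - 5 * Real.logb 2 (Real.exp 1) * ε ≤
      ∑ l ∈ Finset.Icc (-L1) L2, ∑ s, q s *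
        (binEnt (binConv (1 / (1 + Real.exp (2 ^ l / EX)))
            (1 / (1 + Real.exp (2 ^ l / EZ s)))) -
          binEnt (1 / (1 + Real.exp (2 ^ l / EZ s)))) := by
  have hlog2 : (0:ℝ) < Real.log 2 := Real.log_pos (by norm_num)
  -- per-state hypotheses
  have h1s : ∀ s, (2:ℝ) ^ (-L1) ≤ ε * EZ s := by
    intro s
    have hinf : Finset.univ.inf' ⟨⟨0, hS⟩, Finset.mem_univ _⟩ (fun s => Real.logb 2 (EZ s)) ≤
        Real.logb 2 (EZ s) := Finset.inf'_le _ (Finset.mem_univ s)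
    have hεEZ : 0 < ε * EZ s := mul_pos hε (hEZ s)
    have hlb : Real.logb 2 ((ε * EZ s)⁻¹) ≤ (L1 : ℝ) := by
      rw [Real.logb_inv, Real.logb_mul (ne_of_gt hε) (ne_of_gt (hEZ s))]
      linarith
    have h := (Real.logb_le_iff_le_rpow (by norm_num) (by positivity)).mp hlb
    rw [Real.rpow_intCast] at h
    have h' : ((2:ℝ) ^ L1)⁻¹ ≤ ((ε * EZ s)⁻¹)⁻¹ := by
      apply inv_anti₀ (by positivity) h
    rw [inv_inv, ← zpow_neg] at h'
    exact h'
  have h2s : EX ≤ ε * (2:ℝ) ^ L2 := by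
    have hlb : Real.logb 2 (EX / ε) ≤ (L2 : ℝ) := by
      rw [Real.logb_div (ne_of_gt hEX) (ne_of_gt hε)]
      linarith
    have h := (Real.logb_le_iff_le_rpow (by norm_num) (by positivity)).mp hlb
    rw [Real.rpow_intCast] at h
    rw [div_le_iff₀ hε] at h
    linarith [h]
  have h3s : ∀ s, EZ s ≤ ε * EX := by
    intro s
    have hinf : Finset.univ.inf' ⟨⟨0, hS⟩, Finset.mem_univ _⟩ (fun s => EX / EZ s) ≤
        EX / EZ s := Finset.inf'_le _ (Finset.mem_univ s)
    have h : 1 / ε ≤ EX / EZ s := le_trans hSNR hinf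
    rw [div_le_div_iff₀ hε (hEZ s)] at h
    linarith
  -- pointwise: binEnt p_l ≤ binEnt (conv)
  have hpt : ∀ (l : ℤ) (s : Fin S),
      q s * (binEnt (1 / (1 + Real.exp ((2:ℝ) ^ l / EX)))
        - binEnt (1 / (1 + Real.exp ((2:ℝ) ^ l / EZ s)))) ≤
      q s * (binEnt (binConv (1 / (1 + Real.exp ((2:ℝ) ^ l / EX)))
            (1 / (1 + Real.exp ((2:ℝ) ^ l / EZ s)))) -
          binEnt (1 / (1 + Real.exp ((2:ℝ) ^ l / EZ s)))) := by
    intro l s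
    apply mul_le_mul_of_nonneg_left _ (hq s)
    apply sub_le_sub_right
    set p := 1 / (1 + Real.exp ((2:ℝ) ^ l / EX)) with hpdef
    set r := 1 / (1 + Real.exp ((2:ℝ) ^ l / EZ s)) with hrdef
    have hEZs := hEZ s
    have hp1 : 1 < Real.exp ((2:ℝ) ^ l / EX) := one_lt_exp_of_pos (by positivity)
    have hr1 : 1 < Real.exp ((2:ℝ) ^ l / EZ s) := one_lt_exp_of_pos (by positivity)
    have hp0 : 0 ≤ p := by positivity
    have hr0 : 0 ≤ r := by positivity
    have hph : p ≤ 2⁻¹ := by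
      rw [hpdef, div_le_iff₀ (by linarith)]; nlinarith
    have hrh : r ≤ 2⁻¹ := by
      rw [hrdef, div_le_iff₀ (by linarith)]; nlinarith
    have hconv1 : p ≤ binConv p r := by unfold binConv; nlinarith
    have hconv2 : binConv p r ≤ 2⁻¹ := by unfold binConv; nlinarith
    exact binEnt_mono hp0 hconv1 hconv2
  calc ∑ s, q s * Real.logb 2 (1 + EX / EZ s) - 5 * Real.logb 2 (Real.exp 1) * ε
      = ∑ s, q s * (Real.logb 2 (1 + EX / EZ s) - 5 * Real.logb 2 (Real.exp 1) * ε) := by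
        simp only [mul_sub, Finset.sum_sub_distrib, ← Finset.sum_mul, hq1, one_mul]
    _ ≤ ∑ s, q s * ∑ l ∈ Finset.Icc (-L1) L2,
          (binEnt (1 / (1 + Real.exp ((2:ℝ) ^ l / EX)))
            - binEnt (1 / (1 + Real.exp ((2:ℝ) ^ l / EZ s)))) := by
        apply Finset.sum_le_sum
        intro s _
        exact mul_le_mul_of_nonneg_left
          (perState L1 L2 EX (EZ s) ε hEX (hEZ s) hε hε1 (h1s s) h2s (h3s s)) (hq s)
    _ = ∑ l ∈ Finset.Icc (-L1) L2, ∑ s, q s *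
          (binEnt (1 / (1 + Real.exp ((2:ℝ) ^ l / EX)))
            - binEnt (1 / (1 + Real.exp ((2:ℝ) ^ l / EZ s)))) := by
        rw [Finset.sum_comm]
        exact Finset.sum_congr rfl fun s _ => (Finset.mul_sum _ _ _)
    _ ≤ _ := by
        apply Finset.sum_le_sum
        intro l _
        apply Finset.sum_le_sum
        intro s _
        exact hpt l s
end
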